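/- Every d-dimensional face of the Birkhoff polytope B_n is the polytope of magic labelings of a positive digraph with n vertices and at most 2n + d - 1 edges; that is, each d-dimensional face of B_n has the form {M ∈ B_n : M_{ij} = 0 for all (i,j) not in S} for a set S of at most 2n - 1 + d positions such that for every (i,j) in S some matrix of the face has positive (i,j) entry. -/

import Mathlib

open Finset

/-- A face of a polytope `P`: either `P` itself, or the (nonempty) intersection of `P`
with a supporting hyperplane. -/
def IsFaceOf {W : Type*} [AddCommGroup W] [Module ℝ W] (F P : Set W) : Prop :=
  F = P ∨ ∃ (c : W →ₗ[ℝ] ℝ) (δ : ℝ), c ≠ 0 ∧ (∀ x ∈ P, c x ≤ δ) ∧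
    (∃ x ∈ P, c x = δ) ∧ F = {x ∈ P | c x = δ}

/-- The Birkhoff polytope `B_n` of `n × n` doubly stochastic matrices. -/
def Birkhoff (n : ℕ) : Set (Matrix (Fin n) (Fin n) ℝ) :=
  {M | (∀ i j, 0 ≤ M i j) ∧ (∀ i, ∑ j, M i j = 1) ∧ (∀ j, ∑ i, M i j = 1)}

lemma birkhoff_convex (n : ℕ) : Convex ℝ (Birkhoff n) := by
  rintro x ⟨hx0, hxr, hxc⟩ y ⟨hy0, hyr, hyc⟩ a b ha hb hab
  refine ⟨fun i j => ?_, fun i => ?_, fun j => ?_⟩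
  · have := hx0 i j; have := hy0 i j
    simp only [Matrix.add_apply, Matrix.smul_apply, smul_eq_mul]
    nlinarith
  · simp only [Matrix.add_apply, Matrix.smul_apply, smul_eq_mul]
    rw [Finset.sum_add_distrib, ← Finset.mul_sum, ← Finset.mul_sum, hxr, hyr]
    linarith
  · simp only [Matrix.add_apply, Matrix.smul_apply, smul_eq_mul]
    rw [Finset.sum_add_distrib, ← Finset.mul_sum, ← Finset.mul_sum, hxc, hyc]
    linarith

lemma birkhoff_entry_le_one {n : ℕ} {M : Matrix (Fin n) (Fin n) ℝ} (hM : M ∈ Birkhoff n)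
    (i j : Fin n) : M i j ≤ 1 := by
  have h := hM.2.1 i
  calc M i j ≤ ∑ j', M i j' := Finset.single_le_sum (fun k _ => hM.1 i k) (Finset.mem_univ j)
  _ = 1 := h

set_option maxHeartbeats 1000000 in
/-- Every `d`-dimensional face of the Birkhoff polytope `B_n` is the polytope of magic
labelings of a positive digraph with `n` vertices and at most `2n + d - 1` edges:
it has the form `{M ∈ B_n | M i j = 0 for all (i, j) ∉ S}` for a set `S` of at most
`2n - 1 + d` positions such that for every `(i, j) ∈ S` some matrix of the face has
positive `(i, j)` entry. -/
theorem birkhoff_faces (n d : ℕ) (hn : 0 < n) (F : Set (Matrix (Fin n) (Fin n) ℝ))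
    (hF : IsFaceOf F (Birkhoff n))
    (hd : Module.finrank ℝ (affineSpan ℝ F).direction = d) :
    ∃ S : Finset (Fin n × Fin n), S.card ≤ 2 * n - 1 + d ∧
      F = {M ∈ Birkhoff n | ∀ p : Fin n × Fin n, p ∉ S → M p.1 p.2 = 0} ∧
      ∀ p ∈ S, ∃ M ∈ F, 0 < M p.1 p.2 := by
  classical
  set S : Finset (Fin n × Fin n) :=
    Finset.univ.filter (fun p => ∃ M ∈ F, 0 < M p.1 p.2) with hSdef
  have hS : ∀ p : Fin n × Fin n, p ∈ S ↔ ∃ M ∈ F, 0 < M p.1 p.2 := by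
    intro p; simp [hSdef]
  have hFsub : F ⊆ Birkhoff n := by
    rcases hF with h | ⟨c, δ, _, _, _, h⟩
    · exact h ▸ subset_rfl
    · rw [h]; exact Set.sep_subset _ _
  have hconv : Convex ℝ F := by
    rcases hF with h | ⟨c, δ, _, _, _, h⟩
    · exact h ▸ birkhoff_convex n
    · rw [h]
      exact (birkhoff_convex n).inter (convex_hyperplane c.isLinear δ)
  have hzero : ∀ M ∈ F, ∀ p : Fin n × Fin n, p ∉ S → M p.1 p.2 = 0 := by
    intro M hM p hp
    have h0 : ¬ (0 < M p.1 p.2) := fun h => hp ((hS p).2 ⟨M, hM, h⟩)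
    have := (hFsub hM).1 p.1 p.2
    linarith
  have hFne : F.Nonempty := by
    rcases hF with h | ⟨c, δ, _, _, ⟨x, hx, hxδ⟩, h⟩
    · refine ⟨1, h ▸ ⟨fun i j => ?_, fun i => ?_, fun j => ?_⟩⟩
      · rw [Matrix.one_apply]; split <;> norm_num
      · simp [Matrix.one_apply]
      · simp [Matrix.one_apply]
    · exact ⟨x, h ▸ ⟨hx, hxδ⟩⟩
  obtain ⟨M₀, hM₀⟩ := hFne
  have hSne : S.Nonempty := by
    by_contra h
    rw [Finset.not_nonempty_iff_eq_empty] at h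
    have hz : ∀ j, M₀ ⟨0, hn⟩ j = 0 := fun j => hzero M₀ hM₀ (⟨0, hn⟩, j) (by simp [h])
    have hr := (hFsub hM₀).2.1 ⟨0, hn⟩
    simp [hz] at hr
  -- a matrix in F positive on all of S
  have hchoice : ∀ p : {q // q ∈ S}, ∃ M ∈ F, 0 < M p.1.1 p.1.2 :=
    fun p => (hS p.1).1 p.2
  choose g hgF hgpos using hchoice
  set w : ℝ := (S.card : ℝ)⁻¹ with hw
  have hcard0 : (0:ℝ) < (S.card : ℝ) := by
    exact_mod_cast Finset.card_pos.2 hSne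
  have hwpos : 0 < w := by positivity
  set N : Matrix (Fin n) (Fin n) ℝ := ∑ p ∈ S.attach, w • g p with hNdef
  have hNF : N ∈ F := by
    refine hconv.sum_mem (fun i _ => le_of_lt hwpos) ?_ (fun i _ => hgF i)
    rw [Finset.sum_const, Finset.card_attach, nsmul_eq_mul, hw]
    field_simp
  have hNapp : ∀ i j, N i j = ∑ p ∈ S.attach, w * g p i j := by
    intro i j; rw [hNdef]
    simp [Matrix.sum_apply]
  have hNpos : ∀ p ∈ S, 0 < N p.1 p.2 := by
    intro p hp
    rw [hNapp]
    refine Finset.sum_pos' (fun q _ => mul_nonneg (le_of_lt hwpos) ((hFsub (hgF q)).1 _ _)) ?_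
    exact ⟨⟨p, hp⟩, Finset.mem_attach _ _, mul_pos hwpos (hgpos ⟨p, hp⟩)⟩
  have hNzero : ∀ p : Fin n × Fin n, p ∉ S → N p.1 p.2 = 0 := hzero N hNF
  -- minimum of N over S
  set m : ℝ := (S.image fun p => N p.1 p.2).min' (hSne.image _) with hm
  have hmpos : 0 < m := by
    obtain ⟨p, hp, hpe⟩ := Finset.mem_image.1 ((S.image fun p => N p.1 p.2).min'_mem (hSne.image _))
    rw [hm, ← hpe]
    exact hNpos p hp
  have hmle : ∀ p ∈ S, m ≤ N p.1 p.2 := fun p hp =>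
    Finset.min'_le _ _ (Finset.mem_image_of_mem _ hp)
  -- Claim A
  have hFA : F = {M ∈ Birkhoff n | ∀ p : Fin n × Fin n, p ∉ S → M p.1 p.2 = 0} := by
    apply Set.Subset.antisymm
    · exact fun M hM => ⟨hFsub hM, fun p hp => hzero M hM p hp⟩
    · rintro M ⟨hMB, hMz⟩
      rcases hF with h | ⟨c, δ, hc0, hle, hex, h⟩
      · rw [h]; exact hMB
      · rw [h]
        refine ⟨hMB, ?_⟩
        have hNδ : c N = δ := (h ▸ hNF).2
        set Q : Matrix (Fin n) (Fin n) ℝ := N + m • (N - M) with hQ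
        have hQapp : ∀ i j, Q i j = N i j + m * (N i j - M i j) := by
          intro i j; simp [hQ, Matrix.add_apply, Matrix.smul_apply, Matrix.sub_apply]
        have hQB : Q ∈ Birkhoff n := by
          refine ⟨fun i j => ?_, fun i => ?_, fun j => ?_⟩
          · rw [hQapp]
            by_cases hp : (i, j) ∈ S
            · have h1 := hmle (i, j) hp
              have h2 := birkhoff_entry_le_one hMB i j
              have h3 := hMB.1 i j
              nlinarith
            · rw [hNzero (i, j) hp, hMz (i, j) hp]; norm_num
          · have : ∀ j', Q i j' = N i j' + m * (N i j' - M i j') := fun j' => hQapp i j'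
            simp only [this]
            rw [Finset.sum_add_distrib, ← Finset.mul_sum, Finset.sum_sub_distrib,
              hMB.2.1 i, (hFsub hNF).2.1 i]
            ring
          · have : ∀ i', Q i' j = N i' j + m * (N i' j - M i' j) := fun i' => hQapp i' j
            simp only [this]
            rw [Finset.sum_add_distrib, ← Finset.mul_sum, Finset.sum_sub_distrib,
              hMB.2.2 j, (hFsub hNF).2.2 j]
            ring
        have hQle := hle Q hQB
        have hMle := hle M hMB
        have hQc : c Q = (1 + m) * δ - m * c M := by
          rw [hQ]
          simp only [map_add, map_smul, map_sub, hNδ, smul_eq_mul]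
          ring
        rw [hQc] at hQle
        nlinarith
  refine ⟨S, ?_, hFA, fun p hp => (hS p).1 hp⟩
  -- dimension bound
  set V := (affineSpan ℝ F).direction with hV
  let ι : (S → ℝ) →ₗ[ℝ] Matrix (Fin n) (Fin n) ℝ :=
    { toFun := fun f i j => if h : (i, j) ∈ S then f ⟨(i, j), h⟩ else 0
      map_add' := by
        intro f g'; funext i j
        show (if h : (i, j) ∈ S then (f + g') ⟨(i, j), h⟩ else 0) =
          (if h : (i, j) ∈ S then f ⟨(i, j), h⟩ else 0) + (if h : (i, j) ∈ S then g' ⟨(i, j), h⟩ else 0)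
        by_cases h : (i, j) ∈ S <;> simp [h, Matrix.add_apply]
      map_smul' := by
        intro a f; funext i j
        show (if h : (i, j) ∈ S then (a • f) ⟨(i, j), h⟩ else 0) =
          a * (if h : (i, j) ∈ S then f ⟨(i, j), h⟩ else 0)
        by_cases h : (i, j) ∈ S <;> simp [h, Matrix.smul_apply] }
  let L : Matrix (Fin n) (Fin n) ℝ →ₗ[ℝ] (Fin n → ℝ) × (Fin n → ℝ) :=
    { toFun := fun X => (fun i => ∑ j, X i j, fun j => ∑ i, X i j)
      map_add' := by
        intro X Y
        refine Prod.ext ?_ ?_ <;> funext i <;>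
          simp [Matrix.add_apply, Finset.sum_add_distrib]
      map_smul' := by
        intro a X
        refine Prod.ext ?_ ?_ <;> funext i <;>
          (simp [Matrix.smul_apply]; rw [Finset.mul_sum]) }
  let G : (Fin n → ℝ) × (Fin n → ℝ) →ₗ[ℝ] ℝ :=
    { toFun := fun x => (∑ i, x.1 i) - (∑ j, x.2 j)
      map_add' := by intro x y; simp [Finset.sum_add_distrib]; ring
      map_smul' := by
        intro a x; simp only [Prod.smul_fst, Prod.smul_snd, Pi.smul_apply, smul_eq_mul,
          RingHom.id_apply]
        rw [mul_sub, Finset.mul_sum, Finset.mul_sum] }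
  let ψ : (S → ℝ) →ₗ[ℝ] (Fin n → ℝ) × (Fin n → ℝ) := L.comp ι
  have hιzero : ∀ (f : S → ℝ) (p : Fin n × Fin n), p ∉ S → ι f p.1 p.2 = 0 := by
    intro f p hp
    show (if h : (p.1, p.2) ∈ S then f ⟨(p.1, p.2), h⟩ else 0) = 0
    rw [dif_neg (by simpa using hp)]
  have hιS : ∀ (f : S → ℝ) (p : {q // q ∈ S}), ι f p.1.1 p.1.2 = f p := by
    intro f p
    show (if h : (p.1.1, p.1.2) ∈ S then f ⟨(p.1.1, p.1.2), h⟩ else 0) = f p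
    rw [dif_pos (by simpa using p.2)]
  -- kernel of ψ maps into V
  have hkerV : ∀ f ∈ LinearMap.ker ψ, ι f ∈ V := by
    intro f hf
    set X := ι f with hX
    have hXz : ∀ p : Fin n × Fin n, p ∉ S → X p.1 p.2 = 0 := hιzero f
    have hXz' : ∀ i j, (i, j) ∉ S → X i j = 0 := fun i j h => hXz (i, j) h
    have hrow : ∀ i, ∑ j, X i j = 0 := by
      intro i
      have := congrFun (congrArg Prod.fst (LinearMap.mem_ker.1 hf)) i
      exact this
    have hcol : ∀ j, ∑ i, X i j = 0 := by
      intro j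
      have := congrFun (congrArg Prod.snd (LinearMap.mem_ker.1 hf)) j
      exact this
    -- bound on entries
    set C : ℝ := (S.image fun p => |X p.1 p.2|).max' (hSne.image _) with hC
    have hCnn : 0 ≤ C := by
      obtain ⟨p, hp, hpe⟩ :=
        Finset.mem_image.1 ((S.image fun p => |X p.1 p.2|).max'_mem (hSne.image _))
      rw [hC, ← hpe]; exact abs_nonneg _
    have hCle : ∀ p ∈ S, |X p.1 p.2| ≤ C := fun p hp =>
      Finset.le_max' _ _ (Finset.mem_image_of_mem (fun p => |X p.1 p.2|) hp)
    set ε : ℝ := m / (C + 1) with hε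
    have hεpos : 0 < ε := by
      rw [hε]; positivity
    have hεC : ε * (C + 1) = m := by
      rw [hε]; field_simp
    have hNX : N + ε • X ∈ F := by
      rw [hFA]
      refine ⟨⟨fun i j => ?_, fun i => ?_, fun j => ?_⟩, fun p hp => ?_⟩
      · simp only [Matrix.add_apply, Matrix.smul_apply, smul_eq_mul]
        by_cases hp : (i, j) ∈ S
        · have h1 := hmle (i, j) hp
          have h2 := hCle (i, j) hp
          have h3 := neg_abs_le (X i j)
          have h4 : ε * |X i j| ≤ ε * (C + 1) := by
            apply mul_le_mul_of_nonneg_left _ (le_of_lt hεpos)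
            simp only at h2; linarith
          nlinarith
        · rw [hNzero (i, j) hp, hXz' i j hp]; norm_num
      · simp only [Matrix.add_apply, Matrix.smul_apply, smul_eq_mul]
        rw [Finset.sum_add_distrib, ← Finset.mul_sum, hrow i, (hFsub hNF).2.1 i]
        ring
      · simp only [Matrix.add_apply, Matrix.smul_apply, smul_eq_mul]
        rw [Finset.sum_add_distrib, ← Finset.mul_sum, hcol j, (hFsub hNF).2.2 j]
        ring
      · simp only [Matrix.add_apply, Matrix.smul_apply, smul_eq_mul]
        rw [hNzero p hp, hXz p hp]; ring
    have hsub : (N + ε • X) - N ∈ V := by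
      rw [hV, direction_affineSpan]
      exact vsub_mem_vectorSpan ℝ hNX hNF
    have heq : (N + ε • X) - N = ε • X := add_sub_cancel_left N (ε • X)
    rw [heq] at hsub
    have : X = ε⁻¹ • (ε • X) := by
      rw [smul_smul, inv_mul_cancel₀ (ne_of_gt hεpos), one_smul]
    show X ∈ V
    rw [this]
    exact Submodule.smul_mem V _ hsub
  -- injective map from ker ψ into V
  have hrange : LinearMap.range ψ ≤ LinearMap.ker G := by
    rintro x ⟨f, rfl⟩
    show (∑ i, ∑ j, ι f i j) - (∑ j, ∑ i, ι f i j) = 0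
    rw [Finset.sum_comm]
    ring
  -- finrank of ker G
  have hGsurj : Function.Surjective G := by
    intro r
    refine ⟨(Pi.single (⟨0, hn⟩ : Fin n) r, 0), ?_⟩
    show (∑ i, Pi.single (⟨0, hn⟩ : Fin n) r i) - (∑ j : Fin n, (0 : Fin n → ℝ) j) = r
    rw [Finset.sum_pi_single']
    simp
  have hGrank : Module.finrank ℝ (LinearMap.range G) = 1 := by
    rw [LinearMap.range_eq_top.2 hGsurj, finrank_top]
    exact Module.finrank_self ℝ
  have hcodim : Module.finrank ℝ ((Fin n → ℝ) × (Fin n → ℝ)) = n + n := by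
    rw [Module.finrank_prod]
    simp [Module.finrank_pi]
  have hkerG : Module.finrank ℝ (LinearMap.ker G) = n + n - 1 := by
    have := G.finrank_range_add_finrank_ker
    rw [hGrank, hcodim] at this
    omega
  have hrankle : Module.finrank ℝ (LinearMap.range ψ) ≤ n + n - 1 := by
    rw [← hkerG]
    exact Submodule.finrank_mono hrange
  -- ker ψ embeds in V
  let j : LinearMap.ker ψ →ₗ[ℝ] V :=
    LinearMap.codRestrict V (ι.comp (LinearMap.ker ψ).subtype) (fun x => hkerV x x.2)
  have hjinj : Function.Injective j := by
    intro a b hab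
    have h1 : ι a.1 = ι b.1 := congrArg Subtype.val hab
    ext p
    have := congrFun (congrFun h1 p.1.1) p.1.2
    rwa [hιS a.1 p, hιS b.1 p] at this
  have hkerle : Module.finrank ℝ (LinearMap.ker ψ) ≤ d := by
    rw [← hd]
    exact LinearMap.finrank_le_finrank_of_injective hjinj
  have hdom : Module.finrank ℝ (S → ℝ) = S.card := by
    rw [Module.finrank_pi]
    exact Fintype.card_coe S
  have hrn := ψ.finrank_range_add_finrank_ker
  rw [hdom] at hrn
  have hn1 : 1 ≤ n := hn
  omega
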